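/- Deterministic single-copy transformations under the SU(2)-SSR on ℋ_n̂: Let p, q : ℕ → ℝ be standard-form weight distributions on ℋ_n̂. The following are equivalent. (i) There exist downward shifts J : ℕ → ℕ, nonnegative coefficient functions c : ℕ → ℕ → ℝ with c μ j = 0 whenever j < J μ, and nonnegative weights w : ℕ → ℝ with ∑' μ, w μ = 1, such that ∑' μ, (c μ j)² = 1 for every j with p j ≠ 0, and (c μ (j + J μ))² · p (j + J μ) = w μ · q j for every μ ∈ ℕ and every j ∈ ℕ (i.e., the transformation is achieved by a trace-preserving SU(2)-invariant Kraus family, each Kraus operator mapping the input pure state to √(w μ) times the target). (ii) p is a convex combination of downward shifts of q: there exists v : ℕ → ℝ with v J ≥ 0 for all J, ∑' J, v J = 1, and p j = ∑_{J = 0}^{j} v J · q (j − J) for every j ∈ ℕ. -/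

import Mathlib

/-- **Deterministic single-copy transformations under the SU(2)-SSR on ℋ_n̂.**
(Here `j : ℕ` indexes twice the angular momentum quantum number.) A trace-preserving
SU(2)-invariant Kraus family (each operator a downward shift `J μ` composed with a
diagonal coefficient operator) maps the pure state with weights `p` to the one with
weights `q` iff `p` is a convex combination of downward shifts of `q`. -/
theorem su2_deterministic_transformation
    (p q : ℕ → ℝ)
    (hp0 : ∀ j, 0 ≤ p j) (hpfin : (Function.support p).Finite) (hpsum : ∑' j, p j = 1)
    (hq0 : ∀ j, 0 ≤ q j) (hqfin : (Function.support q).Finite) (hqsum : ∑' j, q j = 1) :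
    (∃ (J : ℕ → ℕ) (c : ℕ → ℕ → ℝ) (w : ℕ → ℝ),
        (∀ μ j, 0 ≤ c μ j) ∧ (∀ μ j, j < J μ → c μ j = 0) ∧
        (∀ μ, 0 ≤ w μ) ∧ (∑' μ, w μ = 1) ∧
        (∀ j, p j ≠ 0 → ∑' μ, (c μ j) ^ 2 = 1) ∧
        (∀ μ j, (c μ (j + J μ)) ^ 2 * p (j + J μ) = w μ * q j)) ↔
      (∃ v : ℕ → ℝ, (∀ J, 0 ≤ v J) ∧ (∑' J, v J = 1) ∧
        ∀ j, p j = ∑ J ∈ Finset.range (j + 1), v J * q (j - J)) := by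
  constructor
  · rintro ⟨J, c, w, hc0, hcJ, hw0, hwsum, htp, hkraus⟩
    -- `w` is summable
    have hwsummable : Summable w := by
      by_contra h
      rw [tsum_eq_zero_of_not_summable h] at hwsum
      norm_num at hwsum
    -- key: w μ * q (j - J μ) = 0 whenever p j = 0 and J μ ≤ j
    have hzero : ∀ μ j, J μ ≤ j → p j = 0 → w μ * q (j - J μ) = 0 := by
      intro μ j hle hpj
      have := hkraus μ (j - J μ)
      rw [Nat.sub_add_cancel hle, hpj, mul_zero] at this
      exact this.symm
    set f : ℕ × ℕ → ℝ := fun x => if J x.1 = x.2 then w x.1 else 0 with hf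
    have hf0 : 0 ≤ f := by
      intro x; simp only [hf]
      split
      · exact hw0 _
      · exact le_refl 0
    have hfle : ∀ μ K, f (μ, K) ≤ w μ := by
      intro μ K; simp only [hf]
      split
      · exact le_refl _
      · exact hw0 _
    have hfib : ∀ μ, (∑' K, f (μ, K)) = w μ := by
      intro μ
      simp only [hf]
      rw [show (fun K => if J μ = K then w μ else 0) = fun K => if K = J μ then w μ else 0 by
        funext K; simp [eq_comm]]
      exact tsum_ite_eq (J μ) (fun _ => w μ)
    have hfsummable : Summable f := by
      rw [summable_prod_of_nonneg hf0]
      constructor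
      · intro μ
        apply summable_of_ne_finset_zero (s := {J μ})
        intro K hK
        simp only [Finset.mem_singleton] at hK
        simp [hf, Ne.symm hK]
      · simpa only [hfib] using hwsummable
    have hslice : ∀ K, Summable (fun μ => f (μ, K)) :=
      fun K => hwsummable.of_nonneg_of_le (fun μ => hf0 (μ, K)) (fun μ => hfle μ K)
    set v : ℕ → ℝ := fun K => ∑' μ, f (μ, K) with hv
    have hv0 : ∀ K, 0 ≤ v K := fun K => tsum_nonneg fun μ => hf0 _
    refine ⟨v, hv0, ?_, ?_⟩
    · have hrow : ∀ μ, Summable (fun K => f (μ, K)) :=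
        ((summable_prod_of_nonneg hf0).mp hfsummable).1
      calc ∑' K, v K = ∑' μ, ∑' K, f (μ, K) :=
          Summable.tsum_comm' (f := fun μ K => f (μ, K)) hfsummable hrow hslice
        _ = ∑' μ, w μ := by simp only [hfib]
        _ = 1 := hwsum
    · intro j
      have hterm : ∀ μ, ∑ K ∈ Finset.range (j + 1), f (μ, K) * q (j - K)
          = (if J μ ≤ j then w μ * q (j - J μ) else 0) := by
        intro μ
        have : ∀ K ∈ Finset.range (j + 1), f (μ, K) * q (j - K)
            = (if J μ = K then w μ * q (j - K) else 0) := by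
          intro K _; simp only [hf]; split <;> simp
        rw [Finset.sum_congr rfl this, Finset.sum_ite_eq]
        simp [Finset.mem_range, Nat.lt_succ_iff]
      have step1 : ∑ K ∈ Finset.range (j + 1), v K * q (j - K)
          = ∑' μ, (if J μ ≤ j then w μ * q (j - J μ) else 0) := by
        have h1 : ∀ K ∈ Finset.range (j + 1),
            v K * q (j - K) = ∑' μ, f (μ, K) * q (j - K) := by
          intro K _
          rw [hv, tsum_mul_right]
        rw [Finset.sum_congr rfl h1,
          ← Summable.tsum_finsetSum (fun K _ => (hslice K).mul_right _)]
        exact tsum_congr hterm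
      rw [step1]
      by_cases hpj : p j = 0
      · rw [hpj]
        symm
        have hz : ∀ μ, (if J μ ≤ j then w μ * q (j - J μ) else 0) = 0 := by
          intro μ; split
          · exact hzero μ j ‹_› hpj
          · rfl
        rw [tsum_congr hz, tsum_zero]
      · have hterm2 : ∀ μ, (if J μ ≤ j then w μ * q (j - J μ) else 0)
            = (c μ j) ^ 2 * p j := by
          intro μ
          by_cases hle : J μ ≤ j
          · rw [if_pos hle, ← hkraus μ (j - J μ), Nat.sub_add_cancel hle]
          · rw [if_neg hle, hcJ μ j (Nat.lt_of_not_le hle)]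
            ring
        rw [tsum_congr hterm2, tsum_mul_right, htp j hpj, one_mul]
  · rintro ⟨v, hv0, hvsum, hvp⟩
    classical
    refine ⟨id, fun μ j => if p j = 0 then 0 else if μ ≤ j then
        Real.sqrt (v μ * q (j - μ) / p j) else 0, v, ?_, ?_, hv0, hvsum, ?_, ?_⟩
    · intro μ j
      dsimp only
      split
      · exact le_refl 0
      · split
        · exact Real.sqrt_nonneg _
        · exact le_refl 0
    · intro μ j hj
      simp only [id] at hj
      dsimp only
      split
      · rfl
      · rw [if_neg (Nat.not_le.mpr hj)]
    · intro j hpj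
      have hsq : ∀ μ, ((if p j = 0 then 0 else if μ ≤ j then
          Real.sqrt (v μ * q (j - μ) / p j) else 0)) ^ 2
          = (if μ ≤ j then v μ * q (j - μ) / p j else 0) := by
        intro μ
        rw [if_neg hpj]
        split
        · exact Real.sq_sqrt
            (div_nonneg (mul_nonneg (hv0 μ) (hq0 _)) (hp0 j))
        · ring
      rw [tsum_congr hsq, tsum_eq_sum (s := Finset.range (j + 1))
        (by intro μ hμ; simp only [Finset.mem_range, Nat.lt_succ_iff] at hμ; rw [if_neg hμ])]
      have : ∀ μ ∈ Finset.range (j + 1),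
          (if μ ≤ j then v μ * q (j - μ) / p j else 0) = v μ * q (j - μ) / p j := by
        intro μ hμ
        simp only [Finset.mem_range, Nat.lt_succ_iff] at hμ
        rw [if_pos hμ]
      rw [Finset.sum_congr rfl this, ← Finset.sum_div, ← hvp j, div_self hpj]
    · intro μ j
      simp only [id]
      by_cases hpk : p (j + μ) = 0
      · rw [hpk, mul_zero]
        symm
        have := hvp (j + μ)
        rw [hpk] at this
        have hall := (Finset.sum_eq_zero_iff_of_nonneg
          (fun K _ => mul_nonneg (hv0 K) (hq0 _))).mp this.symm
        have := hall μ (by simp [Finset.mem_range, Nat.lt_succ_iff])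
        simpa using this
      · rw [if_neg hpk, if_pos (Nat.le_add_left μ j), Real.sq_sqrt (div_nonneg (mul_nonneg (hv0 μ) (hq0 _)) (hp0 _)),
          Nat.add_sub_cancel, div_mul_cancel₀ _ hpk]
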